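/- In the girth-4 setting: if for some i ∈ {1,2,3,4} there exist adjacent vertices u ∈ T_{x_i} and v ∈ T_{x_{i+2}} (indices modulo 4), then T_{{x_{i+1},x_{i+3}}} = ∅; hence T₂ = T_{{x_i,x_{i+2}}}. -/

import Mathlib

/-- The adjacency matrix of a simple graph over `ℝ` is Hermitian. -/
lemma adjMatrix_isHermitian {V : Type*} [Fintype V] (G : SimpleGraph V)
    [DecidableRel G.Adj] : ((G.adjMatrix ℝ)).IsHermitian := by
  rw [Matrix.IsHermitian, Matrix.conjTranspose_eq_transpose_of_trivial]
  exact G.isSymm_adjMatrix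

/-- The number of eigenvalues (counted with multiplicity) of the real adjacency matrix of `G`
satisfying the predicate `p`. -/
noncomputable def eigCount {V : Type*} [Fintype V] [DecidableEq V]
    (G : SimpleGraph V) (p : ℝ → Prop) : ℕ := by
  classical
  exact (Finset.univ.filter fun i =>
    p ((adjMatrix_isHermitian G).eigenvalues i)).card
/-- `HasMinor G H` : `H` is a minor of `G`, witnessed by a family of pairwise disjoint
nonempty branch sets, each inducing a connected subgraph of `G`, such that every edge of `H`
is realized by an edge of `G` between the corresponding branch sets. -/
def HasMinor {V : Type*} {W : Type*} (G : SimpleGraph V) (H : SimpleGraph W) : Prop :=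
  ∃ B : W → Set V,
    (∀ w, (B w).Nonempty) ∧
    (Pairwise fun w₁ w₂ => Disjoint (B w₁) (B w₂)) ∧
    (∀ w, (G.induce (B w)).Connected) ∧
    (∀ ⦃w₁ w₂⦄, H.Adj w₁ w₂ → ∃ a ∈ B w₁, ∃ b ∈ B w₂, G.Adj a b)

/-- `G` is planar in the sense of Wagner: it has neither `K₅` nor `K_{3,3}` as a minor. -/
def WagnerPlanar {V : Type*} (G : SimpleGraph V) : Prop :=
  ¬ HasMinor G (⊤ : SimpleGraph (Fin 5)) ∧
    ¬ HasMinor G (completeBipartiteGraph (Fin 3) (Fin 3))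
/-- For a 4-cycle `x₀x₁x₂x₃x₀` in `G` and `S ⊆ Fin 4`, the set
`T_S = {v ∉ {x₀,x₁,x₂,x₃} : N(v) ∩ {x₀,x₁,x₂,x₃} = {x i : i ∈ S}}`. -/
def TS {V : Type*} (G : SimpleGraph V) (x : Fin 4 → V) (S : Set (Fin 4)) : Set V :=
  {v | v ∉ Set.range x ∧ ∀ i, G.Adj v (x i) ↔ i ∈ S}

/-- The set `T_j` of vertices outside the 4-cycle having exactly `j` neighbors among
`{x₀,x₁,x₂,x₃}`. -/
def Tdeg {V : Type*} (G : SimpleGraph V) (x : Fin 4 → V) (j : ℕ) : Set V :=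
  {v | v ∉ Set.range x ∧ {i : Fin 4 | G.Adj v (x i)}.ncard = j}


open Matrix


lemma dotProduct_sum'' {n ι : Type*} [Fintype n] [Fintype ι] (x : n → ℝ) (f : ι → n → ℝ) :
    x ⬝ᵥ (∑ i, f i) = ∑ i, x ⬝ᵥ f i := by
  simp only [dotProduct, Finset.sum_apply, Finset.mul_sum]
  exact Finset.sum_comm

lemma sum_dotProduct'' {n ι : Type*} [Fintype n] [Fintype ι] (x : n → ℝ) (f : ι → n → ℝ) :
    (∑ i, f i) ⬝ᵥ x = ∑ i, f i ⬝ᵥ x := by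
  simp only [dotProduct, Finset.sum_apply, Finset.sum_mul]
  exact Finset.sum_comm

lemma quadform_support {V : Type*} [Fintype V] [DecidableEq V] (A : Matrix V V ℝ) {m : ℕ}
    (p : Fin m → V) (c d : Fin m → ℝ) :
    (∑ j, c j • (Pi.single (p j) (1:ℝ) : V → ℝ)) ⬝ᵥ A *ᵥ (∑ k, d k • (Pi.single (p k) (1:ℝ) : V → ℝ))
      = ∑ j, ∑ k, c j * d k * A (p j) (p k) := by
  rw [show A *ᵥ (∑ k, d k • (Pi.single (p k) (1:ℝ) : V → ℝ)) = ∑ k, d k • (A *ᵥ (Pi.single (p k) (1:ℝ) : V → ℝ)) by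
    rw [← Matrix.mulVecLin_apply, map_sum]; simp [Matrix.mulVecLin_apply, Matrix.mulVec_smul]]
  rw [sum_dotProduct'']
  congr 1; funext j
  rw [smul_dotProduct, dotProduct_sum'', smul_eq_mul, Finset.mul_sum]
  congr 1; funext k
  rw [dotProduct_smul, single_dotProduct]
  simp [Matrix.mulVec_single, smul_eq_mul]
  ring

lemma dot_support {V : Type*} [Fintype V] [DecidableEq V] {m : ℕ}
    (p : Fin m → V) (c d : Fin m → ℝ) :
    (∑ j, c j • (Pi.single (p j) (1:ℝ) : V → ℝ)) ⬝ᵥ (∑ k, d k • (Pi.single (p k) (1:ℝ) : V → ℝ))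
      = ∑ j, ∑ k, c j * d k * (if p j = p k then (1:ℝ) else 0) := by
  rw [sum_dotProduct'']
  congr 1; funext j
  rw [smul_dotProduct, dotProduct_sum'', smul_eq_mul, Finset.mul_sum]
  congr 1; funext k
  rw [dotProduct_smul, single_dotProduct]
  simp only [Pi.single_apply, smul_eq_mul, one_mul]
  by_cases h : p j = p k <;> simp [h] <;> ring

lemma dot_expand {n : Type*} [Fintype n] [DecidableEq n] (e : n → n → ℝ)
    (hortho : ∀ i j, e i ⬝ᵥ e j = if i = j then 1 else 0) (c d : n → ℝ) :
    (∑ i, c i • e i) ⬝ᵥ (∑ j, d j • e j) = ∑ i, c i * d i := by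
  rw [sum_dotProduct'']
  congr 1; funext i
  rw [smul_dotProduct, dotProduct_sum'']
  simp_rw [dotProduct_smul, hortho]
  simp [Finset.sum_ite_eq]

lemma spectral_two_big {n : Type*} [Fintype n] [DecidableEq n] {A : Matrix n n ℝ}
    (hA : A.IsHermitian) (y z : n → ℝ)
    (hqy : 0 < y ⬝ᵥ A *ᵥ y - y ⬝ᵥ y)
    (hdet : (y ⬝ᵥ A *ᵥ z - y ⬝ᵥ z) ^ 2 <
      (y ⬝ᵥ A *ᵥ y - y ⬝ᵥ y) * (z ⬝ᵥ A *ᵥ z - z ⬝ᵥ z)) :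
    ∃ i j : n, i ≠ j ∧ 1 < hA.eigenvalues i ∧ 1 < hA.eigenvalues j := by
  by_contra hcon
  set e : n → (n → ℝ) := fun i => ⇑(hA.eigenvectorBasis i) with he
  have hortho : ∀ i j, e i ⬝ᵥ e j = if i = j then 1 else 0 := by
    intro i j
    have h := orthonormal_iff_ite.mp hA.eigenvectorBasis.orthonormal i j
    simpa [PiLp.inner_apply, dotProduct, RCLike.inner_apply, he, mul_comm] using h
  have hrepr : ∀ x : n → ℝ, ∑ i, (e i ⬝ᵥ x) • e i = x := by
    intro x
    have h := hA.eigenvectorBasis.sum_repr' (WithLp.toLp 2 x)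
    have h2 : ∀ i, (inner ℝ (hA.eigenvectorBasis i) (WithLp.toLp 2 x) : ℝ) = e i ⬝ᵥ x := by
      intro i
      simp [PiLp.inner_apply, dotProduct, RCLike.inner_apply, he, mul_comm]
    simp_rw [h2] at h
    have h3 := congrArg WithLp.ofLp h
    simpa [he] using h3
  have hAx : ∀ x : n → ℝ, x ⬝ᵥ A *ᵥ x = ∑ i, hA.eigenvalues i * (e i ⬝ᵥ x)^2 := by
    intro x
    conv_lhs => rw [← hrepr x]
    rw [show A *ᵥ (∑ i, (e i ⬝ᵥ x) • e i) = ∑ i, (hA.eigenvalues i * (e i ⬝ᵥ x)) • e i by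
      rw [← Matrix.mulVecLin_apply, map_sum]
      congr 1; funext i
      simp only [Matrix.mulVecLin_apply, Matrix.mulVec_smul]
      rw [he]; rw [hA.mulVec_eigenvectorBasis]
      rw [smul_smul, mul_comm]]
    rw [dot_expand e hortho]
    congr 1; funext i; ring
  have hxx : ∀ x : n → ℝ, x ⬝ᵥ x = ∑ i, (e i ⬝ᵥ x)^2 := by
    intro x
    conv_lhs => rw [← hrepr x]
    rw [dot_expand e hortho]
    congr 1; funext i; ring
  -- the key bound
  have hbound : ∀ x : n → ℝ, (∀ i, 1 < hA.eigenvalues i → e i ⬝ᵥ x = 0) →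
      x ⬝ᵥ A *ᵥ x ≤ x ⬝ᵥ x := by
    intro x hx
    rw [hAx, hxx]
    apply Finset.sum_le_sum
    intro i _
    by_cases h1 : 1 < hA.eigenvalues i
    · rw [hx i h1]; simp
    · nlinarith [sq_nonneg (e i ⬝ᵥ x), not_lt.mp h1]
  by_cases hP : ∃ i0, 1 < hA.eigenvalues i0
  · obtain ⟨i0, hi0⟩ := hP
    have huniq : ∀ j, 1 < hA.eigenvalues j → j = i0 := by
      intro j hj
      by_contra hne
      exact hcon ⟨j, i0, hne, hj, hi0⟩
    set a : ℝ := e i0 ⬝ᵥ z with ha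
    set b : ℝ := -(e i0 ⬝ᵥ y) with hb
    by_cases hab : a = 0 ∧ b = 0
    · have := hbound y (fun i h1 => by rw [huniq i h1]; have := hab.2; rw [hb] at this; linarith)
      linarith
    · have hx0 : ∀ i, 1 < hA.eigenvalues i → e i ⬝ᵥ (a • y + b • z) = 0 := by
        intro i h1
        rw [huniq i h1, dotProduct_add, dotProduct_smul, dotProduct_smul]
        rw [ha, hb]; simp [smul_eq_mul]; ring
      have hle := hbound _ hx0
      -- expand the quadratic form
      have hsymm : ∀ v w : n → ℝ, v ⬝ᵥ A *ᵥ w = w ⬝ᵥ A *ᵥ v := by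
        intro v w
        rw [Matrix.dotProduct_mulVec]
        have hAT : Aᵀ = A := by
          have := hA; rw [Matrix.IsHermitian, Matrix.conjTranspose_eq_transpose_of_trivial] at this
          exact this
        rw [show v ᵥ* A = A *ᵥ v by rw [← hAT, Matrix.mulVec_transpose, hAT]]
        exact dotProduct_comm _ _
      have hexp : (a • y + b • z) ⬝ᵥ A *ᵥ (a • y + b • z) - (a • y + b • z) ⬝ᵥ (a • y + b • z)
          = a^2 * (y ⬝ᵥ A *ᵥ y - y ⬝ᵥ y) + 2*a*b*(y ⬝ᵥ A *ᵥ z - y ⬝ᵥ z)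
            + b^2 * (z ⬝ᵥ A *ᵥ z - z ⬝ᵥ z) := by
        simp only [Matrix.mulVec_add, Matrix.mulVec_smul, dotProduct_add,
          add_dotProduct, dotProduct_smul, smul_dotProduct, smul_eq_mul]
        rw [hsymm z y]
        rw [dotProduct_comm z y]
        ring
      replace hle := sub_nonpos.mpr hle
      rw [hexp] at hle
      have hQ := hqy
      rcases eq_or_ne b 0 with hb0 | hb0
      · rcases eq_or_ne a 0 with ha0 | ha0
        · exact hab ⟨ha0, hb0⟩
        · have ha2 : 0 < a^2 := by positivity
          rw [hb0] at hle
          nlinarith [mul_pos ha2 hqy]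
      · have hb2 : 0 < b^2 := by positivity
        have key := mul_nonpos_of_nonneg_of_nonpos (le_of_lt hqy) hle
        nlinarith [key, sq_nonneg (a * (y ⬝ᵥ A *ᵥ y - y ⬝ᵥ y) + b * (y ⬝ᵥ A *ᵥ z - y ⬝ᵥ z)),
          mul_pos hb2 (sub_pos.mpr hdet)]
  · push_neg at hP
    have := hbound y (fun i h1 => absurd h1 (not_lt.mpr (hP i)))
    linarith


lemma induce_singleton_connected {V : Type*} (G : SimpleGraph V) (a : V) :
    (G.induce {a}).Connected := by
  haveI : Nonempty ({a} : Set V) := ⟨⟨a, rfl⟩⟩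
  constructor
  intro c d
  have hc := c.2
  have hd := d.2
  simp only [Set.mem_singleton_iff] at hc hd
  have : c = d := Subtype.ext (hc.trans hd.symm)
  rw [this]

lemma induce_pair_connected {V : Type*} (G : SimpleGraph V) {a b : V} (hab : G.Adj a b) :
    (G.induce {a, b}).Connected := by
  haveI : Nonempty ({a, b} : Set V) := ⟨⟨a, by simp⟩⟩
  constructor
  intro c d
  have hc : c.1 = a ∨ c.1 = b := by
    have h := c.2
    simpa only [Set.mem_insert_iff, Set.mem_singleton_iff] using h
  have hd : d.1 = a ∨ d.1 = b := by
    have h := d.2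
    simpa only [Set.mem_insert_iff, Set.mem_singleton_iff] using h
  have hadj : ∀ (s t : ({a, b} : Set V)), s.1 = a → t.1 = b → (G.induce {a, b}).Adj s t := by
    intro s t hs ht
    have : G.Adj s.1 t.1 := by rw [hs, ht]; exact hab
    exact this
  rcases hc with hc | hc <;> rcases hd with hd | hd
  · rw [Subtype.ext (hc.trans hd.symm)]
  · exact (hadj c d hc hd).reachable
  · exact ((hadj d c hd hc).reachable).symm
  · rw [Subtype.ext (hc.trans hd.symm)]

lemma fin4_arith : ∀ i : Fin 4, i+1+1 = i+2 ∧ i+2+1 = i+3 ∧ i+3+1 = i ∧ i ≠ i+1 ∧ i ≠ i+2 ∧ i ≠ i+3 ∧ i+1 ≠ i+2 ∧ i+1 ≠ i+3 ∧ i+2 ≠ i+3 := by decide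

set_option maxHeartbeats 1600000 in
/-- in the girth-4 setting, if for some `i` there are adjacent vertices
`u ∈ T_{x_i}` and `v ∈ T_{x_{i+2}}`, then `T_{{x_{i+1},x_{i+3}}} = ∅`, hence
`T₂ = T_{{x_i,x_{i+2}}}`. -/
theorem girth_four_opposite_edge_kills_other_T2 {V : Type*} [Fintype V] [DecidableEq V] (G : SimpleGraph V)
    (hconn : G.Connected) (htf : G.CliqueFree 3)
    (hl : eigCount G (fun t => 1 < t) ≤ 1) (hplanar : WagnerPlanar G)
    (hgirth : G.egirth = 4) (x : Fin 4 → V) (hinj : Function.Injective x)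
    (hcyc : ∀ i, G.Adj (x i) (x (i + 1))) :
    ∀ i : Fin 4, (∃ u ∈ TS G x {i}, ∃ v ∈ TS G x {i + 2}, G.Adj u v) →
      TS G x {i + 1, i + 3} = ∅ ∧ Tdeg G x 2 = TS G x {i, i + 2} := by
  classical
  rintro i ⟨u, hu, v, hv, huv⟩
  obtain ⟨harith1, harith2, harith3, hne01, hne02, hne03, hne12, hne13, hne23⟩ := fin4_arith i
  -- cycle adjacencies
  have a12 : G.Adj (x (i+1)) (x (i+2)) := by have := hcyc (i+1); rwa [harith1] at this
  have a23 : G.Adj (x (i+2)) (x (i+3)) := by have := hcyc (i+2); rwa [harith2] at this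
  have a30 : G.Adj (x (i+3)) (x i) := by have := hcyc (i+3); rwa [harith3] at this
  -- triangle-free diagonals
  have n02 : ¬ G.Adj (x i) (x (i+2)) := fun h =>
    htf {x i, x (i+1), x (i+2)} (SimpleGraph.is3Clique_triple_iff.mpr ⟨hcyc i, h, a12⟩)
  have n13 : ¬ G.Adj (x (i+1)) (x (i+3)) := fun h =>
    htf {x (i+1), x (i+2), x (i+3)} (SimpleGraph.is3Clique_triple_iff.mpr ⟨a12, h, a23⟩)
  -- adjacency of u and v to the cycle
  have hux0 : G.Adj u (x i) := (hu.2 i).mpr rfl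
  have hnux1 : ¬ G.Adj u (x (i+1)) := fun h => hne01 ((hu.2 (i+1)).mp h).symm
  have hnux2 : ¬ G.Adj u (x (i+2)) := fun h => hne02 ((hu.2 (i+2)).mp h).symm
  have hnux3 : ¬ G.Adj u (x (i+3)) := fun h => hne03 ((hu.2 (i+3)).mp h).symm
  have hvx2 : G.Adj v (x (i+2)) := (hv.2 (i+2)).mpr rfl
  have hnvx0 : ¬ G.Adj v (x i) := fun h => hne02 ((hv.2 i).mp h)
  have hnvx1 : ¬ G.Adj v (x (i+1)) := fun h => hne12 ((hv.2 (i+1)).mp h)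
  have hnvx3 : ¬ G.Adj v (x (i+3)) := fun h => hne23 (((hv.2 (i+3)).mp h)).symm
  -- Part 1 : TS G x {i+1, i+3} = ∅
  have part1 : TS G x {i + 1, i + 3} = ∅ := by
    rw [Set.eq_empty_iff_forall_notMem]
    intro w hw
    replace hw : w ∉ Set.range x ∧ ∀ j, G.Adj w (x j) ↔ j = i+1 ∨ j = i+3 := by
      obtain ⟨h1, h2⟩ := hw
      exact ⟨h1, fun j => by simpa using h2 j⟩
    have hwx1 : G.Adj w (x (i+1)) := (hw.2 (i+1)).mpr (Or.inl rfl)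
    have hwx3 : G.Adj w (x (i+3)) := (hw.2 (i+3)).mpr (Or.inr rfl)
    have hnwx0 : ¬ G.Adj w (x i) := fun h => by
      rcases (hw.2 i).mp h with h' | h'
      · exact hne01 h'
      · exact hne03 h'
    have hnwx2 : ¬ G.Adj w (x (i+2)) := fun h => by
      rcases (hw.2 (i+2)).mp h with h' | h'
      · exact hne12 h'.symm
      · exact hne23 h'
    by_cases hedge : G.Adj u w ∨ G.Adj v w
    · -- K_{3,3} minor
      exfalso
      apply hplanar.2
      refine ⟨Sum.elim ![{x i}, {x (i+2)}, {w}] ![{x (i+1)}, {x (i+3)}, {u, v}], ?_, ?_, ?_, ?_⟩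
      · rintro (a | a) <;> fin_cases a <;> simp
      · have hall : ∀ t : V, t ∈ ({u, v} : Set V) → t = u ∨ t = v := by intro t ht; simpa using ht
        have hne_uvw : ∀ t : V, t ∈ ({u, v} : Set V) → t ≠ x i ∧ t ≠ x (i+1) ∧ t ≠ x (i+2) ∧ t ≠ x (i+3) ∧ t ≠ w := by
          intro t ht
          rcases hall t ht with rfl | rfl
          · exact ⟨fun h => hu.1 ⟨i, h.symm⟩, fun h => hu.1 ⟨i+1, h.symm⟩, fun h => hu.1 ⟨i+2, h.symm⟩,
              fun h => hu.1 ⟨i+3, h.symm⟩, fun h => hnwx0 (h ▸ hux0)⟩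
          · exact ⟨fun h => hv.1 ⟨i, h.symm⟩, fun h => hv.1 ⟨i+1, h.symm⟩, fun h => hv.1 ⟨i+2, h.symm⟩,
              fun h => hv.1 ⟨i+3, h.symm⟩, fun h => hnwx2 (h ▸ hvx2)⟩
        rintro (a | a) (b | b) hne <;> fin_cases a <;> fin_cases b <;>
          first
          | exact absurd rfl hne
          | (rw [Set.disjoint_left]
             intro t ht ht'
             simp only [Sum.elim_inl, Sum.elim_inr, Matrix.cons_val_zero, Matrix.cons_val_one,
               Matrix.head_cons, Set.mem_singleton_iff, Matrix.cons_val_two, Matrix.tail_cons] at ht ht' <;>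
             first
             | (subst ht
                rcases hne_uvw _ ht' with ⟨e0, e1, e2, e3, ew⟩
                simp_all)
             | (subst ht'
                rcases hne_uvw _ ht with ⟨e0, e1, e2, e3, ew⟩
                simp_all)
             | (subst ht
                first
                | exact hinj.ne hne01 ht'
                | exact hinj.ne hne02 ht'
                | exact hinj.ne hne03 ht'
                | exact hinj.ne hne12 ht'
                | exact hinj.ne hne13 ht'
                | exact hinj.ne hne23 ht'
                | exact hinj.ne hne01.symm ht'
                | exact hinj.ne hne02.symm ht'
                | exact hinj.ne hne03.symm ht'
                | exact hinj.ne hne12.symm ht'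
                | exact hinj.ne hne13.symm ht'
                | exact hinj.ne hne23.symm ht'
                | exact hw.1 ⟨i, ht'.symm⟩
                | exact hw.1 ⟨i+1, ht'.symm⟩
                | exact hw.1 ⟨i+2, ht'.symm⟩
                | exact hw.1 ⟨i+3, ht'.symm⟩
                | exact hw.1 ⟨i, ht'⟩
                | exact hw.1 ⟨i+1, ht'⟩
                | exact hw.1 ⟨i+2, ht'⟩
                | exact hw.1 ⟨i+3, ht'⟩))
      · rintro (a | a) <;> fin_cases a <;>
          simp only [Sum.elim_inl, Sum.elim_inr, Matrix.cons_val_zero, Matrix.cons_val_one,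
            Matrix.head_cons, Matrix.cons_val_two, Matrix.tail_cons]
        · exact induce_singleton_connected G _
        · exact induce_singleton_connected G _
        · exact induce_singleton_connected G _
        · exact induce_singleton_connected G _
        · exact induce_singleton_connected G _
        · exact induce_pair_connected G huv
      · rintro (a | b) (c | d) hadj
        · simp [completeBipartiteGraph] at hadj
        · fin_cases a <;> fin_cases d <;>
            simp only [Sum.elim_inl, Sum.elim_inr, Matrix.cons_val_zero, Matrix.cons_val_one,
              Matrix.head_cons, Matrix.cons_val_two, Matrix.tail_cons]
          · exact ⟨x i, rfl, x (i+1), rfl, hcyc i⟩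
          · exact ⟨x i, rfl, x (i+3), rfl, a30.symm⟩
          · exact ⟨x i, rfl, u, Or.inl rfl, hux0.symm⟩
          · exact ⟨x (i+2), rfl, x (i+1), rfl, a12.symm⟩
          · exact ⟨x (i+2), rfl, x (i+3), rfl, a23⟩
          · exact ⟨x (i+2), rfl, v, Or.inr rfl, hvx2.symm⟩
          · exact ⟨w, rfl, x (i+1), rfl, hwx1⟩
          · exact ⟨w, rfl, x (i+3), rfl, hwx3⟩
          · rcases hedge with he | he
            · exact ⟨w, rfl, u, Or.inl rfl, he.symm⟩
            · exact ⟨w, rfl, v, Or.inr rfl, he.symm⟩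
        · fin_cases b <;> fin_cases c <;>
            simp only [Sum.elim_inl, Sum.elim_inr, Matrix.cons_val_zero, Matrix.cons_val_one,
              Matrix.head_cons, Matrix.cons_val_two, Matrix.tail_cons]
          · exact ⟨x (i+1), rfl, x i, rfl, (hcyc i).symm⟩
          · exact ⟨x (i+1), rfl, x (i+2), rfl, a12⟩
          · exact ⟨x (i+1), rfl, w, rfl, hwx1.symm⟩
          · exact ⟨x (i+3), rfl, x i, rfl, a30⟩
          · exact ⟨x (i+3), rfl, x (i+2), rfl, a23.symm⟩
          · exact ⟨x (i+3), rfl, w, rfl, hwx3.symm⟩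
          · exact ⟨u, Or.inl rfl, x i, rfl, hux0⟩
          · exact ⟨v, Or.inr rfl, x (i+2), rfl, hvx2⟩
          · rcases hedge with he | he
            · exact ⟨u, Or.inl rfl, w, rfl, he⟩
            · exact ⟨v, Or.inr rfl, w, rfl, he⟩
        · simp [completeBipartiteGraph] at hadj
    · -- spectral case
      push_neg at hedge
      obtain ⟨huw, hvw⟩ := hedge
      have hA01 : G.Adj (x i) (x (i+1)) := hcyc i
      have hA10 : G.Adj (x (i+1)) (x i) := hA01.symm
      have hA12 : G.Adj (x (i+1)) (x (i+2)) := a12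
      have hA21 : G.Adj (x (i+2)) (x (i+1)) := hA12.symm
      have hA23 : G.Adj (x (i+2)) (x (i+3)) := a23
      have hA32 : G.Adj (x (i+3)) (x (i+2)) := hA23.symm
      have hA30 : G.Adj (x (i+3)) (x i) := a30
      have hA03 : G.Adj (x i) (x (i+3)) := hA30.symm
      have hA04 : G.Adj (x i) (u) := hux0.symm
      have hA40 : G.Adj (u) (x i) := hA04.symm
      have hA45 : G.Adj (u) (v) := huv
      have hA54 : G.Adj (v) (u) := hA45.symm
      have hA52 : G.Adj (v) (x (i+2)) := hvx2
      have hA25 : G.Adj (x (i+2)) (v) := hA52.symm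
      have hA16 : G.Adj (x (i+1)) (w) := hwx1.symm
      have hA61 : G.Adj (w) (x (i+1)) := hA16.symm
      have hA63 : G.Adj (w) (x (i+3)) := hwx3
      have hA36 : G.Adj (x (i+3)) (w) := hA63.symm
      have hN02 : ¬ G.Adj (x i) (x (i+2)) := n02
      have hN20 : ¬ G.Adj (x (i+2)) (x i) := fun h => hN02 h.symm
      have hN05 : ¬ G.Adj (x i) (v) := fun h => hnvx0 h.symm
      have hN50 : ¬ G.Adj (v) (x i) := fun h => hN05 h.symm
      have hN06 : ¬ G.Adj (x i) (w) := fun h => hnwx0 h.symm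
      have hN60 : ¬ G.Adj (w) (x i) := fun h => hN06 h.symm
      have hN13 : ¬ G.Adj (x (i+1)) (x (i+3)) := n13
      have hN31 : ¬ G.Adj (x (i+3)) (x (i+1)) := fun h => hN13 h.symm
      have hN14 : ¬ G.Adj (x (i+1)) (u) := fun h => hnux1 h.symm
      have hN41 : ¬ G.Adj (u) (x (i+1)) := fun h => hN14 h.symm
      have hN15 : ¬ G.Adj (x (i+1)) (v) := fun h => hnvx1 h.symm
      have hN51 : ¬ G.Adj (v) (x (i+1)) := fun h => hN15 h.symm
      have hN24 : ¬ G.Adj (x (i+2)) (u) := fun h => hnux2 h.symm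
      have hN42 : ¬ G.Adj (u) (x (i+2)) := fun h => hN24 h.symm
      have hN26 : ¬ G.Adj (x (i+2)) (w) := fun h => hnwx2 h.symm
      have hN62 : ¬ G.Adj (w) (x (i+2)) := fun h => hN26 h.symm
      have hN34 : ¬ G.Adj (x (i+3)) (u) := fun h => hnux3 h.symm
      have hN43 : ¬ G.Adj (u) (x (i+3)) := fun h => hN34 h.symm
      have hN35 : ¬ G.Adj (x (i+3)) (v) := fun h => hnvx3 h.symm
      have hN53 : ¬ G.Adj (v) (x (i+3)) := fun h => hN35 h.symm
      have hN46 : ¬ G.Adj (u) (w) := huw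
      have hN64 : ¬ G.Adj (w) (u) := fun h => hN46 h.symm
      have hN56 : ¬ G.Adj (v) (w) := hvw
      have hN65 : ¬ G.Adj (w) (v) := fun h => hN56 h.symm
      have hE01 : (x i) ≠ (x (i+1)) := hinj.ne hne01
      have hE10 : (x (i+1)) ≠ (x i) := hE01.symm
      have hE02 : (x i) ≠ (x (i+2)) := hinj.ne hne02
      have hE20 : (x (i+2)) ≠ (x i) := hE02.symm
      have hE03 : (x i) ≠ (x (i+3)) := hinj.ne hne03
      have hE30 : (x (i+3)) ≠ (x i) := hE03.symm
      have hE04 : (x i) ≠ (u) := fun h => hu.1 ⟨i, h⟩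
      have hE40 : (u) ≠ (x i) := hE04.symm
      have hE05 : (x i) ≠ (v) := fun h => hv.1 ⟨i, h⟩
      have hE50 : (v) ≠ (x i) := hE05.symm
      have hE06 : (x i) ≠ (w) := fun h => hw.1 ⟨i, h⟩
      have hE60 : (w) ≠ (x i) := hE06.symm
      have hE12 : (x (i+1)) ≠ (x (i+2)) := hinj.ne hne12
      have hE21 : (x (i+2)) ≠ (x (i+1)) := hE12.symm
      have hE13 : (x (i+1)) ≠ (x (i+3)) := hinj.ne hne13
      have hE31 : (x (i+3)) ≠ (x (i+1)) := hE13.symm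
      have hE14 : (x (i+1)) ≠ (u) := fun h => hu.1 ⟨i+1, h⟩
      have hE41 : (u) ≠ (x (i+1)) := hE14.symm
      have hE15 : (x (i+1)) ≠ (v) := fun h => hv.1 ⟨i+1, h⟩
      have hE51 : (v) ≠ (x (i+1)) := hE15.symm
      have hE16 : (x (i+1)) ≠ (w) := fun h => hw.1 ⟨i+1, h⟩
      have hE61 : (w) ≠ (x (i+1)) := hE16.symm
      have hE23 : (x (i+2)) ≠ (x (i+3)) := hinj.ne hne23
      have hE32 : (x (i+3)) ≠ (x (i+2)) := hE23.symm
      have hE24 : (x (i+2)) ≠ (u) := fun h => hu.1 ⟨i+2, h⟩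
      have hE42 : (u) ≠ (x (i+2)) := hE24.symm
      have hE25 : (x (i+2)) ≠ (v) := fun h => hv.1 ⟨i+2, h⟩
      have hE52 : (v) ≠ (x (i+2)) := hE25.symm
      have hE26 : (x (i+2)) ≠ (w) := fun h => hw.1 ⟨i+2, h⟩
      have hE62 : (w) ≠ (x (i+2)) := hE26.symm
      have hE34 : (x (i+3)) ≠ (u) := fun h => hu.1 ⟨i+3, h⟩
      have hE43 : (u) ≠ (x (i+3)) := hE34.symm
      have hE35 : (x (i+3)) ≠ (v) := fun h => hv.1 ⟨i+3, h⟩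
      have hE53 : (v) ≠ (x (i+3)) := hE35.symm
      have hE36 : (x (i+3)) ≠ (w) := fun h => hw.1 ⟨i+3, h⟩
      have hE63 : (w) ≠ (x (i+3)) := hE36.symm
      have hE45 : (u) ≠ (v) := huv.ne
      have hE54 : (v) ≠ (u) := hE45.symm
      have hE46 : (u) ≠ (w) := fun h => hnwx0 (h ▸ hux0)
      have hE64 : (w) ≠ (u) := hE46.symm
      have hE56 : (v) ≠ (w) := fun h => hnwx2 (h ▸ hvx2)
      have hE65 : (w) ≠ (v) := hE56.symm
      -- the certificate vectors
      set p : Fin 7 → V := ![x i, x (i+1), x (i+2), x (i+3), u, v, w] with hp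
      set cy : Fin 7 → ℝ := ![4, 4, 4, 4, 3, 3, 3] with hcy
      set cz : Fin 7 → ℝ := ![-1, 2, -1, 2, -6, -6, 4] with hcz
      set yv : V → ℝ := ∑ j, cy j • (Pi.single (p j) (1:ℝ) : V → ℝ) with hyv
      set zv : V → ℝ := ∑ j, cz j • (Pi.single (p j) (1:ℝ) : V → ℝ) with hzv
      have hp0 : p 0 = x i := rfl
      have hp1 : p 1 = x (i+1) := rfl
      have hp2 : p 2 = x (i+2) := rfl
      have hp3 : p 3 = x (i+3) := rfl
      have hp4 : p 4 = u := rfl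
      have hp5 : p 5 = v := rfl
      have hp6 : p 6 = w := rfl
      have hcy0 : cy 0 = 4 := rfl
      have hcy1 : cy 1 = 4 := rfl
      have hcy2 : cy 2 = 4 := rfl
      have hcy3 : cy 3 = 4 := rfl
      have hcy4 : cy 4 = 3 := rfl
      have hcy5 : cy 5 = 3 := rfl
      have hcy6 : cy 6 = 3 := rfl
      have hcz0 : cz 0 = (-1:ℝ) := rfl
      have hcz1 : cz 1 = (2:ℝ) := rfl
      have hcz2 : cz 2 = (-1:ℝ) := rfl
      have hcz3 : cz 3 = (2:ℝ) := rfl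
      have hcz4 : cz 4 = (-6:ℝ) := rfl
      have hcz5 : cz 5 = (-6:ℝ) := rfl
      have hcz6 : cz 6 = (4:ℝ) := rfl
      have key1 : yv ⬝ᵥ (G.adjMatrix ℝ) *ᵥ yv = 242 := by
        rw [hyv, quadform_support]
        simp only [Fin.sum_univ_seven, hp0, hp1, hp2, hp3, hp4, hp5, hp6, hcy0, hcy1, hcy2, hcy3, hcy4, hcy5, hcy6, Matrix.cons_val_zero,
          Matrix.cons_val_one, Matrix.head_cons, Matrix.cons_val_two, Matrix.tail_cons,
          Matrix.cons_val_three, Matrix.cons_val_four, SimpleGraph.adjMatrix_apply,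
          hA01, hA10, hA12, hA21, hA23, hA32, hA30, hA03, hA04, hA40, hA45, hA54, hA52, hA25, hA16, hA61, hA63, hA36, hN02, hN20, hN05, hN50, hN06, hN60, hN13, hN31, hN14, hN41, hN15, hN51, hN24, hN42, hN26, hN62, hN34, hN43, hN35, hN53, hN46, hN64, hN56, hN65, SimpleGraph.irrefl]
        norm_num
      have key2 : yv ⬝ᵥ yv = 91 := by
        rw [hyv, dot_support]
        simp only [Fin.sum_univ_seven, hp0, hp1, hp2, hp3, hp4, hp5, hp6, hcy0, hcy1, hcy2, hcy3, hcy4, hcy5, hcy6, Matrix.cons_val_zero,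
          Matrix.cons_val_one, Matrix.head_cons, Matrix.cons_val_two, Matrix.tail_cons,
          Matrix.cons_val_three, Matrix.cons_val_four,
          hE01, hE10, hE02, hE20, hE03, hE30, hE04, hE40, hE05, hE50, hE06, hE60, hE12, hE21, hE13, hE31, hE14, hE41, hE15, hE51, hE16, hE61, hE23, hE32, hE24, hE42, hE25, hE52, hE26, hE62, hE34, hE43, hE35, hE53, hE36, hE63, hE45, hE54, hE46, hE64, hE56, hE65]
        norm_num
      have key3 : zv ⬝ᵥ (G.adjMatrix ℝ) *ᵥ zv = 112 := by
        rw [hzv, quadform_support]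
        simp only [Fin.sum_univ_seven, hp0, hp1, hp2, hp3, hp4, hp5, hp6, hcz0, hcz1, hcz2, hcz3, hcz4, hcz5, hcz6, Matrix.cons_val_zero,
          Matrix.cons_val_one, Matrix.head_cons, Matrix.cons_val_two, Matrix.tail_cons,
          Matrix.cons_val_three, Matrix.cons_val_four, SimpleGraph.adjMatrix_apply,
          hA01, hA10, hA12, hA21, hA23, hA32, hA30, hA03, hA04, hA40, hA45, hA54, hA52, hA25, hA16, hA61, hA63, hA36, hN02, hN20, hN05, hN50, hN06, hN60, hN13, hN31, hN14, hN41, hN15, hN51, hN24, hN42, hN26, hN62, hN34, hN43, hN35, hN53, hN46, hN64, hN56, hN65, SimpleGraph.irrefl]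
        norm_num
      have key4 : zv ⬝ᵥ zv = 98 := by
        rw [hzv, dot_support]
        simp only [Fin.sum_univ_seven, hp0, hp1, hp2, hp3, hp4, hp5, hp6, hcz0, hcz1, hcz2, hcz3, hcz4, hcz5, hcz6, Matrix.cons_val_zero,
          Matrix.cons_val_one, Matrix.head_cons, Matrix.cons_val_two, Matrix.tail_cons,
          Matrix.cons_val_three, Matrix.cons_val_four,
          hE01, hE10, hE02, hE20, hE03, hE30, hE04, hE40, hE05, hE50, hE06, hE60, hE12, hE21, hE13, hE31, hE14, hE41, hE15, hE51, hE16, hE61, hE23, hE32, hE24, hE42, hE25, hE52, hE26, hE62, hE34, hE43, hE35, hE53, hE36, hE63, hE45, hE54, hE46, hE64, hE56, hE65]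
        norm_num
      have key5 : yv ⬝ᵥ (G.adjMatrix ℝ) *ᵥ zv = -30 := by
        rw [hyv, hzv, quadform_support]
        simp only [Fin.sum_univ_seven, hp0, hp1, hp2, hp3, hp4, hp5, hp6, hcy0, hcy1, hcy2, hcy3, hcy4, hcy5, hcy6, hcz0, hcz1, hcz2, hcz3, hcz4, hcz5, hcz6,
          Matrix.cons_val_zero, Matrix.cons_val_one, Matrix.head_cons, Matrix.cons_val_two,
          Matrix.tail_cons, Matrix.cons_val_three, Matrix.cons_val_four,
          SimpleGraph.adjMatrix_apply,
          hA01, hA10, hA12, hA21, hA23, hA32, hA30, hA03, hA04, hA40, hA45, hA54, hA52, hA25, hA16, hA61, hA63, hA36, hN02, hN20, hN05, hN50, hN06, hN60, hN13, hN31, hN14, hN41, hN15, hN51, hN24, hN42, hN26, hN62, hN34, hN43, hN35, hN53, hN46, hN64, hN56, hN65, SimpleGraph.irrefl]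
        norm_num
      have key6 : yv ⬝ᵥ zv = -16 := by
        rw [hyv, hzv, dot_support]
        simp only [Fin.sum_univ_seven, hp0, hp1, hp2, hp3, hp4, hp5, hp6, hcy0, hcy1, hcy2, hcy3, hcy4, hcy5, hcy6, hcz0, hcz1, hcz2, hcz3, hcz4, hcz5, hcz6,
          Matrix.cons_val_zero, Matrix.cons_val_one, Matrix.head_cons, Matrix.cons_val_two,
          Matrix.tail_cons, Matrix.cons_val_three, Matrix.cons_val_four,
          hE01, hE10, hE02, hE20, hE03, hE30, hE04, hE40, hE05, hE50, hE06, hE60, hE12, hE21, hE13, hE31, hE14, hE41, hE15, hE51, hE16, hE61, hE23, hE32, hE24, hE42, hE25, hE52, hE26, hE62, hE34, hE43, hE35, hE53, hE36, hE63, hE45, hE54, hE46, hE64, hE56, hE65]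
        norm_num
      obtain ⟨a, b, hab, h1, h2⟩ := spectral_two_big (adjMatrix_isHermitian G) yv zv
        (by rw [key1, key2]; norm_num)
        (by rw [key1, key2, key3, key4, key5, key6]; norm_num)
      have : 1 < eigCount G (fun t => 1 < t) := by
        unfold eigCount
        refine Finset.one_lt_card.mpr ⟨a, ?_, b, ?_, hab⟩
        · exact Finset.mem_filter.mpr ⟨Finset.mem_univ _, h1⟩
        · exact Finset.mem_filter.mpr ⟨Finset.mem_univ _, h2⟩
      omega
  refine ⟨part1, ?_⟩
  apply Set.eq_of_subset_of_subset
  · rintro t ⟨htr, htc⟩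
    obtain ⟨c, d, hcd, hS⟩ := Set.ncard_eq_two.mp htc
    have hmem : ∀ j, G.Adj t (x j) ↔ j = c ∨ j = d := by
      intro j
      constructor
      · intro h
        have hj : j ∈ {j : Fin 4 | G.Adj t (x j)} := h
        rw [hS] at hj
        simpa using hj
      · intro h
        have hj : j ∈ {j : Fin 4 | G.Adj t (x j)} := by rw [hS]; simpa using h
        exact hj
    have hnocons : ∀ e : Fin 4, ¬ (G.Adj t (x e) ∧ G.Adj t (x (e+1))) := by
      rintro e ⟨h1, h2⟩
      exact htf {t, x e, x (e+1)} (SimpleGraph.is3Clique_triple_iff.mpr ⟨h1, h2, hcyc e⟩)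
    have hSc : G.Adj t (x c) := (hmem c).mpr (Or.inl rfl)
    have hSd : G.Adj t (x d) := (hmem d).mpr (Or.inr rfl)
    have hdc : d = c + 2 := by
      have h4 : ∀ a b : Fin 4, a ≠ b → b = a + 1 ∨ a = b + 1 ∨ b = a + 2 := by decide
      rcases h4 c d hcd with h | h | h
      · exact absurd ⟨hSc, h ▸ hSd⟩ (hnocons c)
      · exact absurd ⟨hSd, h ▸ hSc⟩ (hnocons d)
      · exact h
    subst hdc
    have harith4 : ∀ j : Fin 4, j+2+2 = j := by decide
    have harith5 : ∀ j : Fin 4, j+1+2 = j+3 := by decide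
    have harith6 : ∀ j : Fin 4, j+3+2 = j+1 := by decide
    have hc4 : c = i ∨ c = i+1 ∨ c = i+2 ∨ c = i+3 :=
      (by decide : ∀ a b : Fin 4, a = b ∨ a = b+1 ∨ a = b+2 ∨ a = b+3) c i
    rcases hc4 with rfl | rfl | rfl | rfl
    · exact ⟨htr, fun j => by rw [hmem j]; simp⟩
    · exfalso
      have ht13 : t ∈ TS G x {i+1, i+3} := ⟨htr, fun j => by rw [hmem j, harith5 i]; simp⟩
      rw [part1] at ht13
      exact ht13
    · refine ⟨htr, fun j => ?_⟩
      rw [hmem j, harith4 i]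
      simp only [Set.mem_insert_iff, Set.mem_singleton_iff]
      tauto
    · exfalso
      have ht13 : t ∈ TS G x {i+1, i+3} := ⟨htr, fun j => by
        rw [hmem j, harith6 i]
        simp only [Set.mem_insert_iff, Set.mem_singleton_iff]
        tauto⟩
      rw [part1] at ht13
      exact ht13
  · rintro t ⟨htr, htc⟩
    refine ⟨htr, ?_⟩
    have hset : {j : Fin 4 | G.Adj t (x j)} = {i, i + 2} := by
      ext j
      simp only [Set.mem_setOf_eq, htc j]
    rw [hset]
    exact Set.ncard_pair hne02
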